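/- arXiv:0911.1835 — 5 statements merged into one kernel-verified Lean document; each statement's English description precedes it below -/
import Mathlib

section
/- Let γ: Δ → Δ' be a map between the root systems of two reductive Lie algebras induced by a root injection, sending positive roots to positive roots and negative roots to negative roots, and compatible with the induced injection of Weyl groups τ: W → W'. Then for every w ∈ W, the length of w (with respect to the chosen positive systems) is at most the length of τ(w). -/
open scoped Classical

/-- Let `γ : Δ → Δ'` be the map on roots induced by a root injection of
reductive Lie algebras, sending positive roots to positive roots and negative roots to
negative roots, compatible with the induced injection `τ : W → W'` of Weyl groups.
Then for every `w ∈ W` the length of `w`, i.e. the cardinality of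
`Φ_w = (w⁻¹Δ⁻) ∩ Δ⁺ = {α ∈ Δ⁺ : w • α ∈ Δ⁻}`, is at most the length of `τ w`. -/
theorem stmt_0
    {Δ Δ' : Type*} [Fintype Δ] [Fintype Δ']
    {W W' : Type*} [Group W] [Group W'] [MulAction W Δ] [MulAction W' Δ']
    (pos : Δ → Prop) (pos' : Δ' → Prop)
    (τ : W →* W') (hτ : Function.Injective τ)
    (γ : Δ → Δ') (hγinj : Function.Injective γ)
    (hγpos : ∀ α, pos α → pos' (γ α))
    (hγneg : ∀ α, ¬ pos α → ¬ pos' (γ α))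
    (hcompat : ∀ (w : W) (α : Δ), γ (w • α) = τ w • γ α)
    (w : W) :
    (Finset.univ.filter fun α : Δ => pos α ∧ ¬ pos (w • α)).card ≤
      (Finset.univ.filter fun α' : Δ' => pos' α' ∧ ¬ pos' (τ w • α')).card := by
  apply Finset.card_le_card_of_injOn γ
  · intro α hα
    simp only [Finset.mem_coe, Finset.mem_filter, Finset.mem_univ, true_and] at hα ⊢
    exact ⟨hγpos α hα.1, by rw [← hcompat]; exact hγneg _ hα.2⟩
  · exact fun a _ b _ h => hγinj h
end

section
/- Let {aₙⁱ : 1 ≤ i ≤ 2ⁿ−1, n ≥ 1} be nonnegative integers satisfying the recursions aₙⁱ = a₍ₙ₊₁₎^{2i−1} + 2·a₍ₙ₊₁₎^{2i} + a₍ₙ₊₁₎^{2i+1} for all n ≥ 1 and 1 ≤ i ≤ 2ⁿ−1. Then there exists n₀ such that for all n > n₀: aₙⁱ = 0 for 2 ≤ i ≤ 2ⁿ−2, and aₙ¹ = a₍ₙ₊₁₎¹ and aₙ^{2ⁿ−1} = a₍ₙ₊₁₎^{2^{n+1}−1}. In particular, such systems are parametrized by two nonnegative integers a', a'' (the eventual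 values of aₙ¹ and aₙ^{2ⁿ−1}). -/
open Finset

private lemma sum_rec_aux (g : ℕ → ℕ) (M : ℕ) :
    (∑ i ∈ Finset.Icc 1 M, (g (2*i-1) + 2 * g (2*i) + g (2*i+1))) + g 1 + g (2*M+1)
      = 2 * ∑ j ∈ Finset.Icc 1 (2*M+1), g j := by
  induction M with
  | zero => simp; omega
  | succ M ih =>
    rw [Finset.sum_Icc_succ_top (by omega : 1 ≤ M + 1)]
    rw [show 2*(M+1)+1 = (2*M+2)+1 by ring,
        Finset.sum_Icc_succ_top (by omega : 1 ≤ 2*M+2+1)]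
    rw [show 2*M+2 = (2*M+1)+1 by omega]
    rw [Finset.sum_Icc_succ_top (by omega : 1 ≤ 2*M+1+1)]
    rw [show 2*(M+1)-1 = 2*M+1 by omega, show 2*(M+1) = 2*M+1+1 by omega]
    omega

private def S (a : ℕ → ℕ → ℕ) (n : ℕ) : ℕ := ∑ j ∈ Finset.Icc 1 (2^n - 1), a n j

private lemma key_lemma (a : ℕ → ℕ → ℕ)
    (hrec : ∀ n, 1 ≤ n → ∀ i, 1 ≤ i → i ≤ 2 ^ n - 1 →
      a n i = a (n + 1) (2 * i - 1) + 2 * a (n + 1) (2 * i) + a (n + 1) (2 * i + 1))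
    (n : ℕ) (hn : 1 ≤ n) :
    S a n + a (n+1) 1 + a (n+1) (2^(n+1) - 1) = 2 * S a (n+1) := by
  have h2 : 1 ≤ 2^n := Nat.one_le_two_pow
  have hpow : 2^(n+1) = 2 * 2^n := by rw [pow_succ]; ring
  have hM : 2*(2^n-1)+1 = 2^(n+1)-1 := by omega
  have hc : S a n = ∑ i ∈ Finset.Icc 1 (2^n-1),
      (a (n+1) (2*i-1) + 2*a (n+1) (2*i) + a (n+1) (2*i+1)) := by
    apply Finset.sum_congr rfl
    intro i hi
    simp only [Finset.mem_Icc] at hi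
    exact hrec n hn i hi.1 hi.2
  have := sum_rec_aux (a (n+1)) (2^n - 1)
  rw [hM] at this
  rw [hc]
  show _ = 2 * S a (n+1)
  unfold S
  exact this

private lemma zero_interior (g : ℕ → ℕ) (K : ℕ) (hK : 3 ≤ K)
    (hsum : ∑ j ∈ Finset.Icc 1 K, g j = g 1 + g K) :
    ∀ j, 2 ≤ j → j ≤ K - 1 → g j = 0 := by
  intro j hj1 hj2
  have hsub : ({1, j, K} : Finset ℕ) ⊆ Finset.Icc 1 K := by
    intro x hx
    simp only [Finset.mem_insert, Finset.mem_singleton] at hx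
    simp only [Finset.mem_Icc]
    rcases hx with h|h|h <;> omega
  have hcard : ∑ x ∈ ({1, j, K} : Finset ℕ), g x = g 1 + g j + g K := by
    rw [Finset.sum_insert (by simp; omega), Finset.sum_insert (by simp; omega),
        Finset.sum_singleton]
    ring
  have hle := Finset.sum_le_sum_of_subset hsub (f := g)
  rw [hcard, hsum] at hle
  omega

/-- (Dominant weights of `SL(2^∞)` for the interlacing Borel subgroup.)
Let `aₙⁱ` (for `n ≥ 1`, `1 ≤ i ≤ 2ⁿ − 1`) be nonnegative integers satisfying
`aₙⁱ = aₙ₊₁^{2i−1} + 2·aₙ₊₁^{2i} + aₙ₊₁^{2i+1}`.  Then there exists `n₀` such that for all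
`n > n₀`: `aₙⁱ = 0` for `2 ≤ i ≤ 2ⁿ − 2`, while `aₙ¹ = aₙ₊₁¹` and
`aₙ^{2ⁿ−1} = aₙ₊₁^{2^{n+1}−1}`. -/
theorem stmt_2 (a : ℕ → ℕ → ℕ)
    (hrec : ∀ n, 1 ≤ n → ∀ i, 1 ≤ i → i ≤ 2 ^ n - 1 →
      a n i = a (n + 1) (2 * i - 1) + 2 * a (n + 1) (2 * i) + a (n + 1) (2 * i + 1)) :
    ∃ n₀ : ℕ, ∀ n, n₀ < n →
      (∀ i, 2 ≤ i → i ≤ 2 ^ n - 2 → a n i = 0) ∧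
      a n 1 = a (n + 1) 1 ∧
      a n (2 ^ n - 1) = a (n + 1) (2 ^ (n + 1) - 1) := by
  -- monotonicity of the total sum
  have hmono : ∀ n, 1 ≤ n → S a (n+1) ≤ S a n := by
    intro n hn
    have hkey := key_lemma a hrec n hn
    have h4 : 4 ≤ 2^(n+1) := by
      calc (4:ℕ) = 2^2 := by norm_num
        _ ≤ 2^(n+1) := Nat.pow_le_pow_right (by norm_num) (by omega)
    have hpair : a (n+1) 1 + a (n+1) (2^(n+1)-1) ≤ S a (n+1) := by
      have hne : (1:ℕ) ≠ 2^(n+1)-1 := by omega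
      have hsub : ({1, 2^(n+1)-1} : Finset ℕ) ⊆ Finset.Icc 1 (2^(n+1)-1) := by
        intro x hx
        simp only [Finset.mem_insert, Finset.mem_singleton] at hx
        simp only [Finset.mem_Icc]
        rcases hx with h|h <;> omega
      calc a (n+1) 1 + a (n+1) (2^(n+1)-1)
          = ∑ x ∈ ({1, 2^(n+1)-1} : Finset ℕ), a (n+1) x := (Finset.sum_pair hne).symm
        _ ≤ S a (n+1) := Finset.sum_le_sum_of_subset hsub
    omega
  -- the shifted sequence is antitone; pick where it attains its infimum
  set c : ℕ → ℕ := fun n => S a (n+1) with hcdef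
  have hanti : Antitone c := antitone_nat_of_succ_le (fun n => hmono (n+1) (by omega))
  obtain ⟨N, hN⟩ := Nat.sInf_mem (Set.range_nonempty c)
  have hconst : ∀ m, N ≤ m → c m = c N := by
    intro m hm
    have h1 : c m ≤ c N := hanti hm
    have h2 : sInf (Set.range c) ≤ c m := Nat.sInf_le ⟨m, rfl⟩
    omega
  -- interior vanishing for all levels ≥ N + 2
  have hzero : ∀ m, N + 2 ≤ m → ∀ j, 2 ≤ j → j ≤ 2^m - 2 → a m j = 0 := by
    intro m hm j hj1 hj2
    have hkey := key_lemma a hrec (m-1) (by omega)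
    rw [show m - 1 + 1 = m by omega] at hkey
    have hbeq : S a (m-1) = S a m := by
      have e1 : c (m-2) = S a (m-1) := by show S a (m-2+1) = S a (m-1); congr 1; omega
      have e2 : c (m-1) = S a m := by show S a (m-1+1) = S a m; congr 1; omega
      have h1 := hconst (m-2) (by omega)
      have h2 := hconst (m-1) (by omega)
      omega
    have h4 : 4 ≤ 2^m := by
      calc (4:ℕ) = 2^2 := by norm_num
        _ ≤ 2^m := Nat.pow_le_pow_right (by norm_num) (by omega)
    have hsum : ∑ j ∈ Finset.Icc 1 (2^m - 1), a m j = a m 1 + a m (2^m - 1) := by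
      have : S a m = a m 1 + a m (2^m - 1) := by omega
      rw [← this]; rfl
    exact zero_interior (a m) (2^m - 1) (by omega) hsum j hj1 (by omega)
  refine ⟨N + 2, fun n hn => ?_⟩
  have h8 : 8 ≤ 2^n := by
    calc (8:ℕ) = 2^3 := by norm_num
      _ ≤ 2^n := Nat.pow_le_pow_right (by norm_num) (by omega)
  have hpow : 2^(n+1) = 2 * 2^n := by rw [pow_succ]; ring
  refine ⟨fun i hi1 hi2 => hzero n (by omega) i hi1 hi2, ?_, ?_⟩
  · have h := hrec n (by omega) 1 le_rfl (by omega)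
    norm_num at h
    have z2 := hzero (n+1) (by omega) 2 (by omega) (by omega)
    have z3 := hzero (n+1) (by omega) 3 (by omega) (by omega)
    omega
  · have h := hrec n (by omega) (2^n - 1) (by omega) le_rfl
    rw [show 2*(2^n-1)+1 = 2^(n+1)-1 by omega,
        show 2*(2^n-1)-1 = 2^(n+1)-3 by omega,
        show 2*(2^n-1) = 2^(n+1)-2 by omega] at h
    have z1 := hzero (n+1) (by omega) (2^(n+1)-3) (by omega) (by omega)
    have z2 := hzero (n+1) (by omega) (2^(n+1)-2) (by omega) (by omega)
    omega
end

section
/- Let {aₙⁱ : 1 ≤ i ≤ 2ⁿ−1, n ≥ 1} be nonnegative integers satisfying aₙⁱ = a₍ₙ₊₁₎^{2i} + 2·a₍ₙ₊₁₎^{2i+1} + a₍ₙ₊₁₎^{2i+2} for 1 ≤ i ≤ 2ⁿ−2 and aₙ^{2ⁿ−1} = a₍ₙ₊₁₎^{2^{n+1}−2} + 2·a₍ₙ₊₁₎^{2^{n+1}−1}, for all n. Then aₙⁱ = 0 for all n and all i. -/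
def Tsum (a : ℕ → ℕ → ℕ) (n t : ℕ) : ℕ := ∑ j ∈ Finset.Icc t (2 ^ n - 1), a n j

lemma Tsum_split (a : ℕ → ℕ → ℕ) (n t : ℕ) (h : t ≤ 2 ^ n - 1) :
    Tsum a n t = a n t + Tsum a n (t + 1) := by
  unfold Tsum
  rw [show Finset.Icc t (2 ^ n - 1) = insert t (Finset.Icc (t + 1) (2 ^ n - 1)) by
        ext x; simp only [Finset.mem_Icc, Finset.mem_insert]; omega,
      Finset.sum_insert (by simp only [Finset.mem_Icc]; omega)]

lemma Tsum_key (a : ℕ → ℕ → ℕ)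
    (hrec : ∀ n, 1 ≤ n → ∀ i, 1 ≤ i → i ≤ 2 ^ n - 2 →
      a n i = a (n + 1) (2 * i) + 2 * a (n + 1) (2 * i + 1) + a (n + 1) (2 * i + 2))
    (hlast : ∀ n, 1 ≤ n →
      a n (2 ^ n - 1) = a (n + 1) (2 ^ (n + 1) - 2) + 2 * a (n + 1) (2 ^ (n + 1) - 1)) :
    ∀ d n s, 1 ≤ n → 1 ≤ s → s + d = 2 ^ n - 1 →
      Tsum a n s = a (n + 1) (2 * s) + 2 * Tsum a (n + 1) (2 * s + 1) := by
  intro d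
  induction d with
  | zero =>
    intro n s hn hs hsd
    have h2 : 2 ≤ 2 ^ n := by
      calc 2 = 2 ^ 1 := rfl
      _ ≤ 2 ^ n := Nat.pow_le_pow_right (by norm_num) hn
    have h2' : 2 ^ (n + 1) = 2 * 2 ^ n := by ring
    have hs' : s = 2 ^ n - 1 := by omega
    subst hs'
    rw [show 2 * (2 ^ n - 1) = 2 ^ (n + 1) - 2 by omega,
        show 2 ^ (n + 1) - 2 + 1 = 2 ^ (n + 1) - 1 by omega]
    unfold Tsum
    rw [Finset.Icc_self, Finset.Icc_self, Finset.sum_singleton, Finset.sum_singleton]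
    exact hlast n hn
  | succ d ih =>
    intro n s hn hs hsd
    have h2 : 2 ≤ 2 ^ n := by
      calc 2 = 2 ^ 1 := rfl
      _ ≤ 2 ^ n := Nat.pow_le_pow_right (by norm_num) hn
    have h2' : 2 ^ (n + 1) = 2 * 2 ^ n := by ring
    have htop : s ≤ 2 ^ n - 1 := by omega
    have hle : s ≤ 2 ^ n - 2 := by omega
    have hb1 : 2 * s + 1 ≤ 2 ^ (n + 1) - 1 := by omega
    have hb2 : 2 * s + 2 ≤ 2 ^ (n + 1) - 1 := by omega
    rw [Tsum_split a n s htop, hrec n hn s hs hle,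
        ih n (s + 1) hn (by omega) (by omega),
        Tsum_split a (n + 1) (2 * s + 1) hb1, Tsum_split a (n + 1) (2 * s + 2) hb2,
        show 2 * (s + 1) = 2 * s + 2 by ring, show 2 * s + 2 + 1 = 2 * s + 3 by ring]
    ring

/-- (Dominant weights of `Sp(2^∞+1)` for an interlacing Borel subgroup
are zero.)  Let `aₙⁱ` (for `n ≥ 1`, `1 ≤ i ≤ 2ⁿ − 1`) be nonnegative integers satisfying
`aₙⁱ = aₙ₊₁^{2i} + 2·aₙ₊₁^{2i+1} + aₙ₊₁^{2i+2}` for `1 ≤ i ≤ 2ⁿ − 2` and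
`aₙ^{2ⁿ−1} = aₙ₊₁^{2^{n+1}−2} + 2·aₙ₊₁^{2^{n+1}−1}`.  Then all `aₙⁱ` vanish. -/
theorem stmt_3 (a : ℕ → ℕ → ℕ)
    (hrec : ∀ n, 1 ≤ n → ∀ i, 1 ≤ i → i ≤ 2 ^ n - 2 →
      a n i = a (n + 1) (2 * i) + 2 * a (n + 1) (2 * i + 1) + a (n + 1) (2 * i + 2))
    (hlast : ∀ n, 1 ≤ n →
      a n (2 ^ n - 1) = a (n + 1) (2 ^ (n + 1) - 2) + 2 * a (n + 1) (2 ^ (n + 1) - 1)) :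
    ∀ n, 1 ≤ n → ∀ i, 1 ≤ i → i ≤ 2 ^ n - 1 → a n i = 0 := by
  -- positivity propagation: a positive entry has a positive child at index ≥ 2i
  have child : ∀ n, 1 ≤ n → ∀ i, 1 ≤ i → i ≤ 2 ^ n - 1 → 0 < a n i →
      ∃ j, 2 * i ≤ j ∧ 1 ≤ j ∧ j ≤ 2 ^ (n + 1) - 1 ∧ 0 < a (n + 1) j := by
    intro n hn i hi1 hi2 hpos
    have h2 : 2 ≤ 2 ^ n := by
      calc 2 = 2 ^ 1 := rfl
      _ ≤ 2 ^ n := Nat.pow_le_pow_right (by norm_num) hn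
    have h2' : 2 ^ (n + 1) = 2 * 2 ^ n := by ring
    rcases Nat.lt_or_ge i (2 ^ n - 1) with hlt | hge
    · have hi2' : i ≤ 2 ^ n - 2 := by omega
      have heq := hrec n hn i hi1 hi2'
      rw [heq] at hpos
      rcases Nat.eq_zero_or_pos (a (n + 1) (2 * i)) with h0 | h
      · rcases Nat.eq_zero_or_pos (a (n + 1) (2 * i + 1)) with h1 | h
        · exact ⟨2 * i + 2, by omega, by omega, by omega, by omega⟩
        · exact ⟨2 * i + 1, by omega, by omega, by omega, h⟩
      · exact ⟨2 * i, by omega, by omega, by omega, h⟩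
    · have hieq : i = 2 ^ n - 1 := le_antisymm hi2 hge
      subst hieq
      rw [hlast n hn] at hpos
      rcases Nat.eq_zero_or_pos (a (n + 1) (2 ^ (n + 1) - 2)) with h0 | h
      · exact ⟨2 ^ (n + 1) - 1, by omega, by omega, by omega, by omega⟩
      · exact ⟨2 ^ (n + 1) - 2, by omega, by omega, by omega, h⟩
  intro n hn i hi1 hi2
  by_contra hne
  have hpos : 0 < a n i := Nat.pos_of_ne_zero hne
  obtain ⟨i₀, hii₀, hi₀1, hi₀2, hi₀pos⟩ := child n hn i hi1 hi2 hpos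
  set n₀ := n + 1 with hn₀
  have hn₀1 : 1 ≤ n₀ := by omega
  have hi₀ge2 : 2 ≤ i₀ := by omega
  -- positivity at level n₀ + k at index ≥ 2^k * i₀
  have iter : ∀ k, ∃ j, 2 ^ k * i₀ ≤ j ∧ j ≤ 2 ^ (n₀ + k) - 1 ∧ 0 < a (n₀ + k) j := by
    intro k
    induction k with
    | zero => exact ⟨i₀, by simp, by simpa using hi₀2, by simpa using hi₀pos⟩
    | succ k ih =>
      obtain ⟨j, hj1, hj2, hj3⟩ := ih
      have hj0 : 1 ≤ j := by
        have : 0 < 2 ^ k * i₀ := Nat.mul_pos (Nat.two_pow_pos k) (by omega)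
        omega
      obtain ⟨j', h1, h2, h3, h4⟩ := child (n₀ + k) (by omega) j hj0 hj2 hj3
      refine ⟨j', ?_, ?_, ?_⟩
      · have : 2 ^ (k + 1) * i₀ = 2 * (2 ^ k * i₀) := by ring
        omega
      · rw [show n₀ + (k + 1) = n₀ + k + 1 by ring]; exact h3
      · rw [show n₀ + (k + 1) = n₀ + k + 1 by ring]; exact h4
  -- bound 2^k * i₀ ≤ 2^(n₀+k) - 2^k
  have hbound : ∀ k, 2 ^ k * i₀ ≤ 2 ^ (n₀ + k) - 2 ^ k := by
    intro k
    have h1 : 2 ^ k * i₀ ≤ 2 ^ k * (2 ^ n₀ - 1) := Nat.mul_le_mul_left _ hi₀2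
    have h2 : 2 ^ k * (2 ^ n₀ - 1) = 2 ^ (n₀ + k) - 2 ^ k := by
      rw [Nat.mul_sub, mul_one, mul_comm, ← pow_add]
    omega
  have hpk : ∀ k : ℕ, 1 ≤ 2 ^ k := fun k => Nat.one_le_two_pow
  -- halving of tail sums
  have hstep : ∀ k, 2 * Tsum a (n₀ + k + 1) (2 ^ (k + 1) * i₀ - 1) ≤
      Tsum a (n₀ + k) (2 ^ k * i₀ - 1) := by
    intro k
    have hb := hbound k
    have hp := hpk k
    have hp2 : 2 ≤ 2 ^ k * i₀ := by
      calc 2 = 1 * 2 := by ring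
      _ ≤ 2 ^ k * i₀ := Nat.mul_le_mul hp hi₀ge2
    have hpn : 2 ^ k ≤ 2 ^ (n₀ + k) := Nat.pow_le_pow_right (by norm_num) (by omega)
    have hkey := Tsum_key a hrec hlast (2 ^ (n₀ + k) - 1 - (2 ^ k * i₀ - 1))
      (n₀ + k) (2 ^ k * i₀ - 1) (by omega) (by omega) (by omega)
    have he : 2 * (2 ^ k * i₀ - 1) + 1 = 2 ^ (k + 1) * i₀ - 1 := by
      have : 2 ^ (k + 1) * i₀ = 2 * (2 ^ k * i₀) := by ring
      omega
    rw [he] at hkey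
    omega
  -- tail sums are positive
  have hlow : ∀ k, 1 ≤ Tsum a (n₀ + k) (2 ^ k * i₀ - 1) := by
    intro k
    obtain ⟨j, hj1, hj2, hj3⟩ := iter k
    have hmem : j ∈ Finset.Icc (2 ^ k * i₀ - 1) (2 ^ (n₀ + k) - 1) := by
      simp only [Finset.mem_Icc]; omega
    calc 1 ≤ a (n₀ + k) j := hj3
    _ ≤ Tsum a (n₀ + k) (2 ^ k * i₀ - 1) :=
        Finset.single_le_sum (f := fun j => a (n₀ + k) j) (fun _ _ => Nat.zero_le _) hmem
  -- growth: 2^k ≤ the fixed initial sum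
  have hgrow : ∀ k, 2 ^ k * Tsum a (n₀ + k) (2 ^ k * i₀ - 1) ≤ Tsum a n₀ (i₀ - 1) := by
    intro k
    induction k with
    | zero => simp
    | succ k ih =>
      have h1 := hstep k
      calc 2 ^ (k + 1) * Tsum a (n₀ + (k + 1)) (2 ^ (k + 1) * i₀ - 1)
          = 2 ^ k * (2 * Tsum a (n₀ + k + 1) (2 ^ (k + 1) * i₀ - 1)) := by ring_nf
        _ ≤ 2 ^ k * Tsum a (n₀ + k) (2 ^ k * i₀ - 1) := Nat.mul_le_mul_left _ h1
        _ ≤ Tsum a n₀ (i₀ - 1) := ih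
  have hfinal : ∀ k, 2 ^ k ≤ Tsum a n₀ (i₀ - 1) := by
    intro k
    calc 2 ^ k = 2 ^ k * 1 := by ring
    _ ≤ 2 ^ k * Tsum a (n₀ + k) (2 ^ k * i₀ - 1) := Nat.mul_le_mul_left _ (hlow k)
    _ ≤ Tsum a n₀ (i₀ - 1) := hgrow k
  have := hfinal (Tsum a n₀ (i₀ - 1))
  have hlt := Nat.lt_two_pow_self (n := Tsum a n₀ (i₀ - 1))
  omega
end

section
/- Let G be a diagonal ind-group with Borel subgroup B and let λ = lim λₙ be a weight of G. Then there is at most one j ≥ 0 with H^j(G/B, O_{−λ}) ≠ 0. -/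
/-- Let `G` be a diagonal ind-group with Borel subgroup `B` and
`λ = lim λₙ` a weight of `G`.  Writing `A n j = H^j(Gₙ/Bₙ, O_{−λₙ})` with the natural
restriction maps `f n j : A (n+1) j → A n j`, and using the classical Bott–Borel–Weil
theorem — at each finite level at most one degree `j` carries nonzero cohomology —
there is at most one `j ≥ 0` for which
`H^j(G/B, O_{−λ}) = lim← A n j` is nonzero. -/
theorem stmt_14 (A : ℕ → ℕ → Type*) [∀ n j, AddCommGroup (A n j)]
    (f : ∀ n j, A (n + 1) j →+ A n j)
    (hBBW : ∀ n j j', (∃ x : A n j, x ≠ 0) → (∃ y : A n j', y ≠ 0) → j = j') :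
    ∀ j j' : ℕ,
      (∃ x : ∀ n, A n j, (∀ n, f n j (x (n + 1)) = x n) ∧ ∃ n, x n ≠ 0) →
      (∃ y : ∀ n, A n j', (∀ n, f n j' (y (n + 1)) = y n) ∧ ∃ n, y n ≠ 0) →
      j = j' := by
  rintro j j' ⟨x, hx, n, hxn⟩ ⟨y, hy, m, hym⟩
  have up : ∀ (k : ℕ) (z : ∀ n, A n k), (∀ n, f n k (z (n + 1)) = z n) →
      ∀ a b, a ≤ b → z a ≠ 0 → z b ≠ 0 := by
    intro k z hz a b hab
    induction b, hab using Nat.le_induction with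
    | base => exact fun h => h
    | succ b hab ih =>
      intro ha hb
      exact ih ha (by rw [← hz b, hb, map_zero])
  have hx' : x (max n m) ≠ 0 := up j x hx n _ (le_max_left n m) hxn
  have hy' : y (max n m) ≠ 0 := up j' y hy m _ (le_max_right n m) hym
  exact hBBW (max n m) j j' ⟨_, hx'⟩ ⟨_, hy'⟩
end

section
/- Let B be the upper triangular Borel subgroup of SL(2^∞) and let λ = lim λₙ with fundamental-weight coefficients satisfying aₙ¹ = n and aₙ^{2^{n−1}+1} = −1 (and compatibility aₙⁱ = a₍ₙ₊₁₎ⁱ + a₍ₙ₊₁₎^{2ⁿ+i}). Let w ∈ W_B be the length-one element with w(n) the simple reflection in the first simple root of bₙ for all n. Then w(n+1)(λₙ₊₁) restricts to λₙ − (n+1)(εₙ¹ − εₙ²) while w(n)(λₙ) = λₙ − n(εₙ¹ − εₙ²); hence {w(n)(λₙ)} is not an inverse system of weights, and W_B does not act on all of P. -/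
/-- The simple reflection in the first simple root `εₙ¹ − εₙ²` of `sl(2ⁿ)`, acting on a
weight written in `ε`-coordinates (`lam i` is the coefficient of `εₙⁱ`, `1 ≤ i ≤ 2ⁿ`):
it swaps the first two coordinates. -/
def swap12 (f : ℕ → ℤ) : ℕ → ℤ :=
  fun i => if i = 1 then f 2 else if i = 2 then f 1 else f i

/-- (`W_B` does not act on all of `P`.)  Let `B` be the upper
triangular Borel subgroup of `SL(2^∞) = lim SL(2ⁿ)`, where `εₙ₊₁ⁱ` and `εₙ₊₁^{2ⁿ+i}`
both restrict to `εₙⁱ`, so a weight `λ = lim λₙ` (coordinates `lam n i` of `λₙ` in the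
`ε`-basis) satisfies `lam n i = lam (n+1) i + lam (n+1) (2ⁿ + i)`.  Suppose its
fundamental-weight coefficients satisfy `aₙ¹ = lam n 1 − lam n 2 = n` and
`aₙ^{2^{n−1}+1} = lam n (2^{n−1}+1) − lam n (2^{n−1}+2) = −1`.  Let `w ∈ W_B` be the
length-one element with `w(n)` the simple reflection in the first simple root, i.e. the
swap of the first two `ε`-coordinates.  Then for every `n ≥ 1`:
(a) the restriction of `w(n+1)(λₙ₊₁)` equals `λₙ − (n+1)(εₙ¹ − εₙ²)`;
(b) `w(n)(λₙ) = λₙ − n(εₙ¹ − εₙ²)`;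
(c) hence those two disagree at some coordinate, so `{w(n)(λₙ)}` is not an inverse
system of weights. -/
theorem stmt_16 (lam : ℕ → ℕ → ℤ)
    (hres : ∀ n, 1 ≤ n → ∀ i, 1 ≤ i → i ≤ 2 ^ n →
      lam n i = lam (n + 1) i + lam (n + 1) (2 ^ n + i))
    (ha1 : ∀ n, 1 ≤ n → lam n 1 - lam n 2 = (n : ℤ))
    (hmid : ∀ n, 2 ≤ n →
      lam n (2 ^ (n - 1) + 1) - lam n (2 ^ (n - 1) + 2) = -1) :
    ∀ n, 1 ≤ n →
      ((∀ i, 1 ≤ i → i ≤ 2 ^ n →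
        swap12 (lam (n + 1)) i + swap12 (lam (n + 1)) (2 ^ n + i) =
          lam n i - (n + 1) * (if i = 1 then 1 else if i = 2 then -1 else 0)) ∧
      (∀ i, 1 ≤ i → i ≤ 2 ^ n →
        swap12 (lam n) i =
          lam n i - (n : ℤ) * (if i = 1 then 1 else if i = 2 then -1 else 0)) ∧
      (∃ i, 1 ≤ i ∧ i ≤ 2 ^ n ∧
        swap12 (lam (n + 1)) i + swap12 (lam (n + 1)) (2 ^ n + i) ≠
          swap12 (lam n) i)) := by
  intro n hn
  have h2n : 2 ≤ 2 ^ n := by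
    calc 2 = 2 ^ 1 := rfl
    _ ≤ 2 ^ n := Nat.pow_le_pow_right (by norm_num) hn
  have ha1' := ha1 (n + 1) (by omega)
  have ha1n := ha1 n hn
  push_cast at ha1'
  have hA : ∀ i, 1 ≤ i → i ≤ 2 ^ n →
      swap12 (lam (n + 1)) i + swap12 (lam (n + 1)) (2 ^ n + i) =
        lam n i - (n + 1) * (if i = 1 then 1 else if i = 2 then -1 else 0) := by
    intro i hi1 hi2
    have hr := hres n hn i hi1 hi2
    have hr1 := hres n hn 1 (by norm_num) (by omega)
    have hr2 := hres n hn 2 (by norm_num) (by omega)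
    simp only [swap12]
    split_ifs <;> subst_vars <;> first | omega | linarith
  refine ⟨hA, ?_, ?_⟩
  · intro i hi1 hi2
    simp only [swap12]
    split_ifs <;> subst_vars <;> first | omega | linarith
  · refine ⟨1, le_refl 1, by omega, ?_⟩
    rw [hA 1 (le_refl 1) (by omega)]
    simp only [swap12]
    split_ifs <;> first | omega | (intro hc; linarith)
end
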